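/- Let A be an n×n and B an m×m matrix of 0's and 1's, and suppose A and B are strong shift equivalent (through 0-1 matrices). Then the subshifts of finite type (X_A, σ_A) and (X_B, σ_B) are topologically conjugate: there is a homeomorphism h : X_A → X_B with h ∘ σ_A = σ_B ∘ h. -/

import Mathlib

/-- The subshift of finite type `X_A ⊆ (Fin n)^ℤ` determined by a 0-1 matrix `A`:
bi-infinite sequences `x` with `A (x k) (x (k+1)) = 1` for all `k ∈ ℤ`. -/
def SubshiftSpace {n : ℕ} (A : Matrix (Fin n) (Fin n) ℤ) : Set (ℤ → Fin n) :=
  {x | ∀ k : ℤ, A (x k) (x (k + 1)) = 1}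

/-- The shift map `σ_A : X_A → X_A`, the restriction of the full shift
`(σ x)_k = x_{k+1}`. -/
def shiftMap {n : ℕ} (A : Matrix (Fin n) (Fin n) ℤ) (x : SubshiftSpace A) :
    SubshiftSpace A :=
  ⟨fun k => (x : ℤ → Fin n) (k + 1), fun k => x.2 (k + 1)⟩

/-- A square integer matrix of some size. -/
structure SqMat where
  n : ℕ
  M : Matrix (Fin n) (Fin n) ℤ

/-- A 0-1 matrix. -/
def SqMat.ZeroOne (A : SqMat) : Prop :=
  ∀ i j, A.M i j = 0 ∨ A.M i j = 1

/-- Elementary strong shift equivalence through 0-1 matrices: `A`, `B` are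
0-1 matrices and `A = RS`, `B = SR` for non-negative integer matrices `R`, `S`. -/
def ElemSSE01 (A B : SqMat) : Prop :=
  A.ZeroOne ∧ B.ZeroOne ∧
  ∃ (R : Matrix (Fin A.n) (Fin B.n) ℤ) (S : Matrix (Fin B.n) (Fin A.n) ℤ),
    (∀ i j, 0 ≤ R i j) ∧ (∀ i j, 0 ≤ S i j) ∧ A.M = R * S ∧ B.M = S * R

/-- Strong shift equivalence through 0-1 matrices: the transitive closure of
elementary strong shift equivalence. -/
def StrongShiftEquiv01 : SqMat → SqMat → Prop :=
  Relation.TransGen ElemSSE01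


lemma existsUnique_mid {p q : ℕ} (R : Matrix (Fin p) (Fin q) ℤ) (S : Matrix (Fin q) (Fin p) ℤ)
    (hR : ∀ i j, 0 ≤ R i j) (hS : ∀ i j, 0 ≤ S i j) (i j : Fin p)
    (h : (R * S) i j = 1) : ∃! k, R i k = 1 ∧ S k j = 1 := by
  have hsum : ∑ k, R i k * S k j = 1 := by rw [← Matrix.mul_apply]; exact h
  have hnn : ∀ k : Fin q, 0 ≤ R i k * S k j := fun k => mul_nonneg (hR i k) (hS k j)
  have hex : ∃ k, R i k * S k j ≠ 0 := by
    by_contra hc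
    push_neg at hc
    rw [Finset.sum_eq_zero (fun k _ => hc k)] at hsum
    exact absurd hsum (by norm_num)
  obtain ⟨k, hk⟩ := hex
  have hle : R i k * S k j ≤ 1 := by
    rw [← hsum]
    exact Finset.single_le_sum (fun k _ => hnn k) (Finset.mem_univ k)
  have hk1 : R i k * S k j = 1 := by
    have := hnn k; omega
  have hone : R i k = 1 ∧ S k j = 1 := by
    rcases Int.mul_eq_one_iff_eq_one_or_neg_one.mp hk1 with h1 | h1
    · exact h1
    · exact absurd (h1.1 ▸ hR i k) (by norm_num)
  refine ⟨k, hone, ?_⟩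
  intro k' hk'
  by_contra hne
  have h2 : R i k' * S k' j = 1 := by rw [hk'.1, hk'.2]; ring
  have hsplit : ∑ l, R i l * S l j = R i k' * S k' j + ∑ l ∈ Finset.univ.erase k', R i l * S l j :=
    (Finset.add_sum_erase _ _ (Finset.mem_univ k')).symm
  have hge : R i k * S k j ≤ ∑ l ∈ Finset.univ.erase k', R i l * S l j :=
    Finset.single_le_sum (fun l _ => hnn l) (Finset.mem_erase.mpr ⟨fun hkk => hne hkk.symm, Finset.mem_univ k⟩)
  omega

lemma entry_one {p q : ℕ} (R : Matrix (Fin p) (Fin q) ℤ) (S : Matrix (Fin q) (Fin p) ℤ)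
    (hR : ∀ i j, 0 ≤ R i j) (hS : ∀ i j, 0 ≤ S i j)
    {M : Matrix (Fin p) (Fin p) ℤ} (hM : M = R * S)
    (hM01 : ∀ i j, M i j = 0 ∨ M i j = 1) {i : Fin p} {c : Fin q} {j : Fin p}
    (h1 : R i c = 1) (h2 : S c j = 1) : M i j = 1 := by
  have hge : (1 : ℤ) ≤ M i j := by
    rw [hM, Matrix.mul_apply]
    calc (1 : ℤ) = R i c * S c j := by rw [h1, h2]; ring
    _ ≤ ∑ l, R i l * S l j :=
        Finset.single_le_sum (fun l _ => mul_nonneg (hR i l) (hS l j)) (Finset.mem_univ c)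
  rcases hM01 i j with h0 | h0 <;> omega

section Elem

variable {p q : ℕ} {A : Matrix (Fin p) (Fin p) ℤ} {B : Matrix (Fin q) (Fin q) ℤ}
  {R : Matrix (Fin p) (Fin q) ℤ} {S : Matrix (Fin q) (Fin p) ℤ}

lemma exMid (hR : ∀ i j, 0 ≤ R i j) (hS : ∀ i j, 0 ≤ S i j) (hRS : A = R * S)
    (x : SubshiftSpace A) (k : ℤ) :
    ∃ w, R (x.1 k) w = 1 ∧ S w (x.1 (k + 1)) = 1 := by
  have h : (R * S) (x.1 k) (x.1 (k + 1)) = 1 := by rw [← hRS]; exact x.2 k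
  exact (existsUnique_mid R S hR hS _ _ h).exists

lemma exMid' (hR : ∀ i j, 0 ≤ R i j) (hS : ∀ i j, 0 ≤ S i j) (hSR : B = S * R)
    (y : SubshiftSpace B) (k : ℤ) :
    ∃ z, S (y.1 (k - 1)) z = 1 ∧ R z (y.1 k) = 1 := by
  have h : (S * R) (y.1 (k - 1)) (y.1 (k - 1 + 1)) = 1 := by rw [← hSR]; exact y.2 (k - 1)
  have hk : (k : ℤ) - 1 + 1 = k := by ring
  rw [hk] at h
  exact (existsUnique_mid S R hS hR _ _ h).exists

noncomputable def fwd0 (hR : ∀ i j, 0 ≤ R i j) (hS : ∀ i j, 0 ≤ S i j) (hRS : A = R * S)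
    (x : SubshiftSpace A) : ℤ → Fin q :=
  fun k => (exMid hR hS hRS x k).choose

lemma fwd0_spec (hR : ∀ i j, 0 ≤ R i j) (hS : ∀ i j, 0 ≤ S i j) (hRS : A = R * S)
    (x : SubshiftSpace A) (k : ℤ) :
    R (x.1 k) (fwd0 hR hS hRS x k) = 1 ∧ S (fwd0 hR hS hRS x k) (x.1 (k + 1)) = 1 :=
  (exMid hR hS hRS x k).choose_spec

noncomputable def bwd0 (hR : ∀ i j, 0 ≤ R i j) (hS : ∀ i j, 0 ≤ S i j) (hSR : B = S * R)
    (y : SubshiftSpace B) : ℤ → Fin p :=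
  fun k => (exMid' hR hS hSR y k).choose

lemma bwd0_spec (hR : ∀ i j, 0 ≤ R i j) (hS : ∀ i j, 0 ≤ S i j) (hSR : B = S * R)
    (y : SubshiftSpace B) (k : ℤ) :
    S (y.1 (k - 1)) (bwd0 hR hS hSR y k) = 1 ∧ R (bwd0 hR hS hSR y k) (y.1 k) = 1 :=
  (exMid' hR hS hSR y k).choose_spec

lemma fwd0_mem (hB : ∀ i j, B i j = 0 ∨ B i j = 1)
    (hR : ∀ i j, 0 ≤ R i j) (hS : ∀ i j, 0 ≤ S i j) (hRS : A = R * S) (hSR : B = S * R)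
    (x : SubshiftSpace A) : fwd0 hR hS hRS x ∈ SubshiftSpace B := by
  intro k
  exact entry_one S R hS hR hSR hB (fwd0_spec hR hS hRS x k).2 (fwd0_spec hR hS hRS x (k + 1)).1

lemma bwd0_mem (hA : ∀ i j, A i j = 0 ∨ A i j = 1)
    (hR : ∀ i j, 0 ≤ R i j) (hS : ∀ i j, 0 ≤ S i j) (hRS : A = R * S) (hSR : B = S * R)
    (y : SubshiftSpace B) : bwd0 hR hS hSR y ∈ SubshiftSpace A := by
  intro k
  have h1 : R (bwd0 hR hS hSR y k) (y.1 k) = 1 := (bwd0_spec hR hS hSR y k).2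
  have h2 : S (y.1 (k + 1 - 1)) (bwd0 hR hS hSR y (k + 1)) = 1 := (bwd0_spec hR hS hSR y (k + 1)).1
  have hk : (k : ℤ) + 1 - 1 = k := by ring
  rw [hk] at h2
  exact entry_one R S hR hS hRS hA h1 h2

lemma elem_conj (hA : ∀ i j, A i j = 0 ∨ A i j = 1) (hB : ∀ i j, B i j = 0 ∨ B i j = 1)
    (hR : ∀ i j, 0 ≤ R i j) (hS : ∀ i j, 0 ≤ S i j) (hRS : A = R * S) (hSR : B = S * R) :
    ∃ h : SubshiftSpace A ≃ₜ SubshiftSpace B,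
      ∀ x : SubshiftSpace A, h (shiftMap A x) = shiftMap B (h x) := by
  classical
  set F : SubshiftSpace A → SubshiftSpace B :=
    fun x => ⟨fwd0 hR hS hRS x, fwd0_mem hB hR hS hRS hSR x⟩ with hF
  set G : SubshiftSpace B → SubshiftSpace A :=
    fun y => ⟨bwd0 hR hS hSR y, bwd0_mem hA hR hS hRS hSR y⟩ with hG
  have hGF : ∀ x, G (F x) = x := by
    intro x
    apply Subtype.ext
    funext k
    have huniq : ∃! z, S ((F x).1 (k - 1)) z = 1 ∧ R z ((F x).1 k) = 1 := by
      have h : (S * R) ((F x).1 (k - 1)) ((F x).1 (k - 1 + 1)) = 1 := by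
        rw [← hSR]; exact (F x).2 (k - 1)
      have hk : (k : ℤ) - 1 + 1 = k := by ring
      rw [hk] at h
      exact existsUnique_mid S R hS hR _ _ h
    have hz : S ((F x).1 (k - 1)) ((G (F x)).1 k) = 1 ∧ R ((G (F x)).1 k) ((F x).1 k) = 1 :=
      bwd0_spec hR hS hSR (F x) k
    have hx : S ((F x).1 (k - 1)) (x.1 k) = 1 ∧ R (x.1 k) ((F x).1 k) = 1 := by
      have h1 := (fwd0_spec hR hS hRS x (k - 1)).2
      have hk : (k : ℤ) - 1 + 1 = k := by ring
      rw [hk] at h1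
      exact ⟨h1, (fwd0_spec hR hS hRS x k).1⟩
    exact (huniq.unique hz hx)
  have hFG : ∀ y, F (G y) = y := by
    intro y
    apply Subtype.ext
    funext k
    have huniq : ∃! w, R ((G y).1 k) w = 1 ∧ S w ((G y).1 (k + 1)) = 1 := by
      have h : (R * S) ((G y).1 k) ((G y).1 (k + 1)) = 1 := by
        rw [← hRS]; exact (G y).2 k
      exact existsUnique_mid R S hR hS _ _ h
    have hw : R ((G y).1 k) ((F (G y)).1 k) = 1 ∧ S ((F (G y)).1 k) ((G y).1 (k + 1)) = 1 :=
      fwd0_spec hR hS hRS (G y) k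
    have hy : R ((G y).1 k) (y.1 k) = 1 ∧ S (y.1 k) ((G y).1 (k + 1)) = 1 := by
      have h2 := (bwd0_spec hR hS hSR y (k + 1)).1
      have hk : (k : ℤ) + 1 - 1 = k := by ring
      rw [hk] at h2
      exact ⟨(bwd0_spec hR hS hSR y k).2, h2⟩
    exact (huniq.unique hw hy)
  have hFcont : Continuous F := by
    apply Continuous.subtype_mk
    apply continuous_pi
    intro k
    have key : (fun x : SubshiftSpace A => fwd0 hR hS hRS x k) =
        (fun pr : {pr : Fin p × Fin p // (R * S) pr.1 pr.2 = 1} =>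
          ((existsUnique_mid R S hR hS pr.1.1 pr.1.2 pr.2).exists).choose) ∘
        (fun x : SubshiftSpace A =>
          (⟨(x.1 k, x.1 (k + 1)), by rw [← hRS]; exact x.2 k⟩ :
            {pr : Fin p × Fin p // (R * S) pr.1 pr.2 = 1})) := by
      funext x; rfl
    rw [key]
    exact (continuous_of_discreteTopology).comp
      (Continuous.subtype_mk (((continuous_apply k).comp continuous_subtype_val).prodMk
        (((continuous_apply (k + 1)).comp continuous_subtype_val))) _)
  have hGcont : Continuous G := by
    apply Continuous.subtype_mk
    apply continuous_pi
    intro k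
    have key : (fun y : SubshiftSpace B => bwd0 hR hS hSR y k) =
        (fun pr : {pr : Fin q × Fin q // (S * R) pr.1 pr.2 = 1} =>
          ((existsUnique_mid S R hS hR pr.1.1 pr.1.2 pr.2).exists).choose) ∘
        (fun y : SubshiftSpace B =>
          (⟨(y.1 (k - 1), y.1 k), by
            have h := y.2 (k - 1)
            have hk : (k : ℤ) - 1 + 1 = k := by ring
            rw [hk] at h
            rw [← hSR]; exact h⟩ :
            {pr : Fin q × Fin q // (S * R) pr.1 pr.2 = 1})) := by
      funext y; rfl
    rw [key]
    exact (continuous_of_discreteTopology).comp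
      (Continuous.subtype_mk (((continuous_apply (k - 1)).comp continuous_subtype_val).prodMk
        (((continuous_apply k).comp continuous_subtype_val))) _)
  refine ⟨⟨⟨F, G, hGF, hFG⟩, hFcont, hGcont⟩, ?_⟩
  intro x
  apply Subtype.ext
  funext k
  rfl

end Elem



def SqConj (P Q : SqMat) : Prop :=
  ∃ h : SubshiftSpace P.M ≃ₜ SubshiftSpace Q.M,
    ∀ x : SubshiftSpace P.M, h (shiftMap P.M x) = shiftMap Q.M (h x)

lemma sqConj_of_elem {P Q : SqMat} (h : ElemSSE01 P Q) : SqConj P Q := by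
  obtain ⟨hP, hQ, R, S, hR, hS, hRS, hSR⟩ := h
  exact elem_conj hP hQ hR hS hRS hSR

lemma sqConj_trans {P Q T : SqMat} (h1 : SqConj P Q) (h2 : SqConj Q T) : SqConj P T := by
  obtain ⟨e1, c1⟩ := h1
  obtain ⟨e2, c2⟩ := h2
  refine ⟨e1.trans e2, fun x => ?_⟩
  simp only [Homeomorph.trans_apply]
  rw [c1, c2]

lemma sqConj_of_sse {P Q : SqMat} (h : StrongShiftEquiv01 P Q) : SqConj P Q := by
  induction h with
  | single h => exact sqConj_of_elem h
  | tail _ h ih => exact sqConj_trans ih (sqConj_of_elem h)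


theorem sft_conjugate_of_strongShiftEquiv (n m : ℕ)
    (A : Matrix (Fin n) (Fin n) ℤ) (B : Matrix (Fin m) (Fin m) ℤ)
    (hA : ∀ i j, A i j = 0 ∨ A i j = 1) (hB : ∀ i j, B i j = 0 ∨ B i j = 1)
    (h : StrongShiftEquiv01 ⟨n, A⟩ ⟨m, B⟩) :
    ∃ h : SubshiftSpace A ≃ₜ SubshiftSpace B,
      ∀ x : SubshiftSpace A, h (shiftMap A x) = shiftMap B (h x) := by
  exact sqConj_of_sse h
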